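/- Let F ⊆ 2^[n] and suppose S is a real number such that for every full chain C in 2^[n], Σ_{G ∈ C ∩ F} C(n,|G|) ≤ S. Then |F| ≤ S. -/

import Mathlib

open Finset

def Tset (n k : ℕ) : Finset (Fin n) := univ.filter (fun j => (j : ℕ) < k)

lemma card_Tset {n k : ℕ} (hk : k ≤ n) : (Tset n k).card = k := by
  have : Tset n k = Finset.attachFin (Finset.range k)
      (fun m hm => lt_of_lt_of_le (Finset.mem_range.mp hm) hk) := by
    ext x
    simp [Tset, Finset.mem_attachFin]
  rw [this, Finset.card_attachFin, Finset.card_range]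

lemma Tset_mono {n k : ℕ} : Tset n k ⊆ Tset n (k+1) := by
  intro x hx
  simp only [Tset, mem_filter, mem_univ, true_and] at *
  omega

lemma subtypeCongr_apply_pos {α : Type*} {p q : α → Prop} [DecidablePred p] [DecidablePred q]
    (e : {x // p x} ≃ {x // q x}) (f : {x // ¬ p x} ≃ {x // ¬ q x}) (x : α) (hx : p x) :
    Equiv.subtypeCongr e f x = (e ⟨x, hx⟩ : α) := by
  simp [Equiv.subtypeCongr, Equiv.sumCompl_symm_apply_of_pos hx]

lemma subtypeCongr_apply_neg {α : Type*} {p q : α → Prop} [DecidablePred p] [DecidablePred q]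
    (e : {x // p x} ≃ {x // q x}) (f : {x // ¬ p x} ≃ {x // ¬ q x}) (x : α) (hx : ¬ p x) :
    Equiv.subtypeCongr e f x = (f ⟨x, hx⟩ : α) := by
  simp [Equiv.subtypeCongr, Equiv.sumCompl_symm_apply_of_neg hx]

def permRestrictEquiv {α : Type*} {p q : α → Prop} [DecidablePred p] [DecidablePred q] :
    {σ : Equiv.Perm α // ∀ x, p x ↔ q (σ x)} ≃
      (({x // p x} ≃ {x // q x}) × ({x // ¬ p x} ≃ {x // ¬ q x})) where
  toFun σ := (σ.1.subtypeEquiv σ.2, σ.1.subtypeEquiv fun a => not_congr (σ.2 a))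
  invFun ef := ⟨Equiv.subtypeCongr ef.1 ef.2, fun x => by
    by_cases hx : p x
    · rw [subtypeCongr_apply_pos _ _ x hx]
      exact ⟨fun _ => (ef.1 ⟨x, hx⟩).2, fun _ => hx⟩
    · rw [subtypeCongr_apply_neg _ _ x hx]
      exact ⟨fun h => absurd h hx, fun h => absurd h (ef.2 ⟨x, hx⟩).2⟩⟩
  left_inv := by
    rintro ⟨σ, hσ⟩
    ext x
    by_cases hx : p x
    · simp [subtypeCongr_apply_pos _ _ x hx]
    · simp [subtypeCongr_apply_neg _ _ x hx]
  right_inv := by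
    rintro ⟨e, f⟩
    ext x
    · simp [Equiv.subtypeEquiv, subtypeCongr_apply_pos _ _ x.1 x.2]
    · simp [Equiv.subtypeEquiv, subtypeCongr_apply_neg _ _ x.1 x.2]

lemma image_eq_iff {α : Type*} [DecidableEq α] (σ : Equiv.Perm α) (T G : Finset α) :
    T.image σ = G ↔ ∀ x, x ∈ T ↔ σ x ∈ G := by
  constructor
  · intro hTG x
    constructor
    · intro hx; rw [← hTG]; exact Finset.mem_image_of_mem _ hx
    · intro hx
      rw [← hTG] at hx
      obtain ⟨y, hy, hyx⟩ := Finset.mem_image.mp hx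
      rwa [← σ.injective hyx]
  · intro hiff
    ext g
    simp only [Finset.mem_image]
    constructor
    · rintro ⟨x, hx, rfl⟩; exact (hiff x).mp hx
    · intro hg
      exact ⟨σ.symm g, (hiff _).mpr (by simpa using hg), by simp⟩

lemma count_perms {n k : ℕ} (hk : k ≤ n) (G : Finset (Fin n)) (hG : G.card = k) :
    (univ.filter fun σ : Equiv.Perm (Fin n) => (Tset n k).image σ = G).card
      = k.factorial * (n - k).factorial := by
  classical
  have h1 : (univ.filter fun σ : Equiv.Perm (Fin n) => (Tset n k).image σ = G)
      = (univ.filter fun σ : Equiv.Perm (Fin n) => ∀ x, x ∈ Tset n k ↔ σ x ∈ G) := by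
    apply Finset.filter_congr
    intro σ _
    simp only [image_eq_iff, eq_iff_iff]
  rw [h1, ← Fintype.card_subtype]
  rw [Fintype.card_congr (permRestrictEquiv (p := fun x => x ∈ Tset n k) (q := fun x => x ∈ G))]
  rw [Fintype.card_prod]
  have cT : Fintype.card {x // x ∈ Tset n k} = k := by
    rw [Fintype.card_coe]; exact card_Tset hk
  have cG : Fintype.card {x // x ∈ G} = k := by
    rw [Fintype.card_coe]; exact hG
  have cT' : Fintype.card {x // ¬ x ∈ Tset n k} = n - k := by
    rw [Fintype.card_subtype_compl, cT, Fintype.card_fin]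
  have cG' : Fintype.card {x // ¬ x ∈ G} = n - k := by
    rw [Fintype.card_subtype_compl, cG, Fintype.card_fin]
  rw [Fintype.card_equiv (Fintype.equivOfCardEq (cT.trans cG.symm)),
    Fintype.card_equiv (Fintype.equivOfCardEq (cT'.trans cG'.symm)), cT, cT']

/-- If for every full chain `C` in `2^[n]` we have `∑_{G ∈ C ∩ F} C(n,|G|) ≤ S`,
then `|F| ≤ S`. -/
theorem main_theorem (n : ℕ) (F : Finset (Finset (Fin n))) (S : ℝ)
    (h : ∀ A : ℕ → Finset (Fin n), (∀ i ≤ n, (A i).card = i) →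
      (∀ i < n, A i ⊆ A (i + 1)) →
      (∑ i ∈ Finset.range (n + 1), if A i ∈ F then (n.choose i : ℝ) else 0) ≤ S) :
    (F.card : ℝ) ≤ S := by
  classical
  have key : ∀ σ : Equiv.Perm (Fin n),
      (∑ i ∈ Finset.range (n+1), if (Tset n i).image σ ∈ F then (n.choose i : ℝ) else 0) ≤ S := by
    intro σ
    refine h (fun i => (Tset n i).image σ) ?_ ?_
    · intro i hi
      rw [Finset.card_image_of_injective _ σ.injective, card_Tset hi]
    · intro i _
      exact Finset.image_subset_image Tset_mono
  have cardle : ∀ G ∈ F, G.card ≤ n := by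
    intro G _
    simpa using Finset.card_le_univ G
  have inner : ∀ σ : Equiv.Perm (Fin n),
      (∑ i ∈ Finset.range (n+1), if (Tset n i).image σ ∈ F then (n.choose i : ℝ) else 0)
        = ∑ G ∈ F, if (Tset n G.card).image σ = G then (n.choose G.card : ℝ) else 0 := by
    intro σ
    rw [← Finset.sum_filter, ← Finset.sum_filter]
    refine Finset.sum_nbij' (fun i => (Tset n i).image σ) (fun G => G.card) ?_ ?_ ?_ ?_ ?_
    · intro i hi
      simp only [Finset.mem_filter, Finset.mem_range] at hi ⊢
      have hc : ((Tset n i).image σ).card = i := by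
        rw [Finset.card_image_of_injective _ σ.injective, card_Tset (Nat.lt_succ_iff.mp hi.1)]
      exact ⟨hi.2, by rw [hc]⟩
    · intro G hG
      simp only [Finset.mem_filter, Finset.mem_range] at hG ⊢
      exact ⟨Nat.lt_succ_of_le (cardle G hG.1), by rw [hG.2]; exact hG.1⟩
    · intro i hi
      simp only [Finset.mem_filter, Finset.mem_range] at hi
      show ((Tset n i).image σ).card = i
      rw [Finset.card_image_of_injective _ σ.injective, card_Tset (Nat.lt_succ_iff.mp hi.1)]
    · intro G hG
      simp only [Finset.mem_filter] at hG
      exact hG.2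
    · intro i hi
      simp only [Finset.mem_filter, Finset.mem_range] at hi
      have : ((Tset n i).image σ).card = i := by
        rw [Finset.card_image_of_injective _ σ.injective, card_Tset (Nat.lt_succ_iff.mp hi.1)]
      rw [this]
  have total : ∑ σ : Equiv.Perm (Fin n),
      (∑ G ∈ F, if (Tset n G.card).image σ = G then (n.choose G.card : ℝ) else 0)
        = (F.card : ℝ) * (n.factorial : ℝ) := by
    rw [Finset.sum_comm]
    have hG : ∀ G ∈ F, (∑ σ : Equiv.Perm (Fin n),
        if (Tset n G.card).image σ = G then (n.choose G.card : ℝ) else 0)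
          = (n.factorial : ℝ) := by
      intro G hGF
      rw [← Finset.sum_filter, Finset.sum_const,
        count_perms (cardle G hGF) G rfl, nsmul_eq_mul]
      have : (G.card.factorial * (n - G.card).factorial) * n.choose G.card = n.factorial := by
        rw [← Nat.choose_mul_factorial_mul_factorial (cardle G hGF)]; ring
      push_cast [← this]
      ring
    rw [Finset.sum_congr rfl hG, Finset.sum_const, nsmul_eq_mul]
  have bound : (F.card : ℝ) * (n.factorial : ℝ) ≤ S * (n.factorial : ℝ) := by
    rw [← total]
    calc ∑ σ : Equiv.Perm (Fin n),
        (∑ G ∈ F, if (Tset n G.card).image σ = G then (n.choose G.card : ℝ) else 0)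
        ≤ ∑ _σ : Equiv.Perm (Fin n), S := by
          refine Finset.sum_le_sum fun σ _ => ?_
          rw [← inner σ]; exact key σ
      _ = S * (n.factorial : ℝ) := by
          rw [Finset.sum_const, nsmul_eq_mul, Finset.card_univ, Fintype.card_perm,
            Fintype.card_fin, mul_comm]
  have hpos : (0 : ℝ) < (n.factorial : ℝ) := by
    exact_mod_cast Nat.factorial_pos n
  exact (mul_le_mul_iff_of_pos_right hpos).mp bound
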